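/- Let P_t be the Markov semigroup of a Markovian cocycle Φ with adapted random periodic path Y of period τ, and ρ_s = Law(Y(s,·)) the associated periodic measure on X. If for fixed s ∈ ℝ the invariant measure ρ_s of the discrete semigroup (P_{kτ})_{k∈ℕ} is ergodic (PS-ergodicity at s), then for every Γ ∈ B(X) with P_τ 1_Γ = 1_Γ ρ_s-a.s., either P-a.s. L_s^ω ∩ Γ = ∅ or P-a.s. L_s^ω ⊆ Γ, where L_s^ω = {Y(s + kτ, ω) : k ∈ ℤ}. -/

import Mathlib

open MeasureTheory

/-- If for a fixed `s` the periodic measure `ρ_s = Law(Y(s,·))` is an ergodic invariant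
measure of the discrete Markov semigroup `(P_{kτ})` (PS-ergodicity at `s`), then for every
`Γ` with `P_τ 1_Γ = 1_Γ` `ρ_s`-a.s., either `P`-a.s. `L_s^ω ∩ Γ = ∅` or `P`-a.s.
`L_s^ω ⊆ Γ`, where `L_s^ω = {Y(s + kτ, ω) : k ∈ ℤ}` and
`(P_τ 1_Γ)(x) = P{ω : Φ(τ,ω)x ∈ Γ}`. -/
theorem trace_dichotomy_of_PS_ergodic
    {Ω : Type*} [MeasurableSpace Ω]
    {X : Type*} [TopologicalSpace X] [PolishSpace X] [MeasurableSpace X] [BorelSpace X]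
    (P : Measure Ω) [IsProbabilityMeasure P]
    (θ : ℝ → Ω → Ω)
    (hθmeas : ∀ t, Measurable (θ t))
    (hθgrp : ∀ t s ω, θ t (θ s ω) = θ (t + s) ω)
    (hθ0 : ∀ ω, θ 0 ω = ω)
    (hθinv : ∀ t, MeasurePreserving (θ t) P P)
    (Φ : ℝ → Ω → X → X)
    (hΦmeas : ∀ t, Measurable fun p : Ω × X => Φ t p.1 p.2)
    (hΦ0 : ∀ᵐ ω ∂P, ∀ x, Φ 0 ω x = x)
    (hΦcoc : ∀ t s, 0 ≤ t → 0 ≤ s → ∀ᵐ ω ∂P, ∀ x,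
      Φ (t + s) ω x = Φ t (θ s ω) (Φ s ω x))
    (Y : ℝ → Ω → X)
    (hYmeas : ∀ s, Measurable (Y s))
    (τ : ℝ) (hτ : 0 < τ)
    (hYper : ∀ t s, 0 ≤ t → ∀ᵐ ω ∂P, Φ t (θ s ω) (Y s ω) = Y (t + s) ω)
    (hYτ : ∀ s, ∀ᵐ ω ∂P, Y (s + τ) ω = Y s (θ τ ω))
    (s : ℝ)
    (hPSerg : ∀ Γ : Set X, MeasurableSet Γ →
      (∀ᵐ x ∂(Measure.map (Y s) P),
        P {ω | Φ τ ω x ∈ Γ} = Γ.indicator (fun _ => (1 : ENNReal)) x) →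
      Measure.map (Y s) P Γ = 0 ∨ Measure.map (Y s) P Γ = 1) :
    ∀ Γ : Set X, MeasurableSet Γ →
      (∀ᵐ x ∂(Measure.map (Y s) P),
        P {ω | Φ τ ω x ∈ Γ} = Γ.indicator (fun _ => (1 : ENNReal)) x) →
      (∀ᵐ ω ∂P, (Set.range fun k : ℤ => Y (s + k * τ) ω) ∩ Γ = ∅) ∨
      (∀ᵐ ω ∂P, (Set.range fun k : ℤ => Y (s + k * τ) ω) ⊆ Γ) := by

  have hstep : ∀ t : ℝ, Measure.map (Y (t + τ)) P = Measure.map (Y t) P := by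
    intro t
    have h1 : Measure.map (Y (t + τ)) P = Measure.map (fun ω => Y t (θ τ ω)) P :=
      Measure.map_congr (hYτ t)
    rw [h1, show (fun ω => Y t (θ τ ω)) = Y t ∘ θ τ from rfl,
      ← Measure.map_map (hYmeas t) (hθmeas τ), (hθinv τ).map_eq]
  have hmap : ∀ k : ℤ, Measure.map (Y (s + k * τ)) P = Measure.map (Y s) P := by
    intro k
    induction k using Int.induction_on with
    | zero => norm_num
    | succ k ih =>
      have he : s + ((k : ℤ) + 1 : ℤ) * τ = (s + (k : ℤ) * τ) + τ := by push_cast; ring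
      rw [he, hstep, ih]
    | pred k ih =>
      have he : s + (-(k : ℤ) : ℤ) * τ = (s + (-(k : ℤ) - 1 : ℤ) * τ) + τ := by
        push_cast; ring
      rw [he, hstep] at ih
      exact ih
  intro Γ hΓ hInv
  rcases hPSerg Γ hΓ hInv with h0 | h1
  · left
    have hk : ∀ k : ℤ, ∀ᵐ ω ∂P, Y (s + k * τ) ω ∉ Γ := by
      intro k
      have h2 : P (Y (s + k * τ) ⁻¹' Γ) = 0 := by
        rw [← Measure.map_apply (hYmeas _) hΓ, hmap k]; exact h0
      exact measure_eq_zero_iff_ae_notMem.mp h2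
    have := (ae_all_iff.2 hk)
    filter_upwards [this] with ω hω
    ext x
    simp only [Set.mem_inter_iff, Set.mem_range, Set.mem_empty_iff_false, iff_false, not_and]
    rintro ⟨k, rfl⟩
    exact hω k
  · right
    have h0 : Measure.map (Y s) P Γᶜ = 0 := by
      have : IsProbabilityMeasure (Measure.map (Y s) P) :=
        Measure.isProbabilityMeasure_map (hYmeas s).aemeasurable
      rw [measure_compl hΓ (measure_ne_top _ _), h1]
      simp
    have hk : ∀ k : ℤ, ∀ᵐ ω ∂P, Y (s + k * τ) ω ∈ Γ := by
      intro k
      have h3 : P (Y (s + k * τ) ⁻¹' Γᶜ) = 0 := by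
        rw [← Measure.map_apply (hYmeas _) hΓ.compl, hmap k]; exact h0
      have h2 : ∀ᵐ ω ∂P, Y (s + k * τ) ω ∉ Γᶜ := measure_eq_zero_iff_ae_notMem.mp h3
      filter_upwards [h2] with ω hω
      simpa using hω
    filter_upwards [ae_all_iff.2 hk] with ω hω
    rintro x ⟨k, rfl⟩
    exact hω k
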